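/- Let R be a finitely generated integral ℚ-algebra, h ∈ R nonzero, and δ a locally nilpotent derivation of the localization R_h. Then there exists m ∈ ℕ such that h^m·δ maps R into R, and h^m·δ restricted to R is a locally nilpotent derivation of R. -/

import Mathlib

private lemma lnd_aux_iter_mul {A : Type*} [CommRing A] (d : A → A)
    (hadd : ∀ a b, d (a + b) = d a + d b)
    (hleib : ∀ a b, d (a * b) = a * d b + b * d a) (x y : A) (n : ℕ) :
    d^[n] (x * y) = ∑ k ∈ Finset.range (n + 1),
      (n.choose k : A) * (d^[k] x * d^[n - k] y) := by
  have h1 : d 1 = 0 := by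
    have := hleib 1 1
    simp only [one_mul] at this
    linear_combination -this
  have h0 : d 0 = 0 := by
    have := hadd 0 0
    rw [add_zero] at this
    linear_combination -this
  have hnat : ∀ m : ℕ, d (m : A) = 0 := by
    intro m
    induction m with
    | zero => simpa using h0
    | succ k ih => rw [Nat.cast_succ, hadd, ih, h1, add_zero]
  have hsum : ∀ (s : Finset ℕ) (f : ℕ → A), d (∑ k ∈ s, f k) = ∑ k ∈ s, d (f k) :=
    fun s f => map_sum (AddMonoidHom.mk' d hadd) f s
  induction n with
  | zero => simp
  | succ n ih =>
    rw [Function.iterate_succ_apply', ih, hsum]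
    have key : ∀ k ∈ Finset.range (n + 1),
        d ((n.choose k : A) * (d^[k] x * d^[n - k] y))
          = (n.choose k : A) * (d^[k] x * d^[(n - k) + 1] y)
            + (n.choose k : A) * (d^[k + 1] x * d^[n - k] y) := by
      intro k _
      rw [hleib, hnat, mul_zero, add_zero, hleib,
        Function.iterate_succ_apply' d (n - k) y, Function.iterate_succ_apply' d k x]
      ring
    rw [Finset.sum_congr rfl key, Finset.sum_add_distrib]
    -- abbreviations
    set u : ℕ → A := fun k => (n.choose k : A) * (d^[k] x * d^[(n - k) + 1] y) with hu
    set w : ℕ → A := fun k => (n.choose k : A) * (d^[k + 1] x * d^[n - k] y) with hw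
    set t : ℕ → A := fun k => ((n + 1).choose k : A) * (d^[k] x * d^[n + 1 - k] y) with ht
    have h_first : t 0 = u 0 := by simp [ht, hu]
    have h_middle : ∀ i ∈ Finset.range (n + 1), t (i + 1) = w i + u (i + 1) := by
      intro i hi
      have hle : i ≤ n := Nat.lt_succ_iff.mp (Finset.mem_range.mp hi)
      rw [ht, hu, hw]
      simp only
      rw [Nat.choose_succ_succ, Nat.cast_add, add_mul, Nat.succ_sub_succ]
      congr 1
      by_cases hin : i = n
      · subst hin
        simp [Nat.choose_succ_self]
      · have : n - (i + 1) + 1 = n - i := by omega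
        rw [this]
    calc ∑ k ∈ Finset.range (n + 1), u k + ∑ k ∈ Finset.range (n + 1), w k
        = (∑ k ∈ Finset.range n, u (k + 1) + u 0) + ∑ k ∈ Finset.range (n + 1), w k := by
          rw [Finset.sum_range_succ' u n]
      _ = ∑ k ∈ Finset.range (n + 1 + 1), t k := by
          rw [Finset.sum_range_succ' t (n + 1), Finset.sum_congr rfl h_middle,
            Finset.sum_add_distrib, h_first, Finset.sum_range_succ (fun i => u (i + 1)) n]
          have hlast : u (n + 1) = 0 := by simp [hu, Nat.choose_succ_self]
          rw [hlast, add_zero]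
          ring



/-- Let `R` be a finitely generated integral `ℚ`-algebra, `h ∈ R` nonzero, and `δ` a
locally nilpotent derivation of the localization `R_h`.  Then there is `m : ℕ` such that
`h^m δ` maps (the image of) `R` into itself, and the restriction is a locally nilpotent
derivation of `R`. -/
theorem lnd_localization_extend {R : Type*} [CommRing R] [IsDomain R] [Algebra ℚ R]
    (hfg : Algebra.FiniteType ℚ R) (h : R) (hh : h ≠ 0)
    (d : Localization.Away h → Localization.Away h)
    (hadd : ∀ a b, d (a + b) = d a + d b)
    (hleib : ∀ a b, d (a * b) = a * d b + b * d a)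
    (hln : ∀ a, ∃ n : ℕ, d^[n] a = 0) :
    ∃ (m : ℕ) (D : R → R),
      (∀ r : R, algebraMap R (Localization.Away h) (D r)
          = algebraMap R (Localization.Away h) h ^ m * d (algebraMap R (Localization.Away h) r)) ∧
      (∀ a b : R, D (a + b) = D a + D b) ∧
      (∀ a b : R, D (a * b) = a * D b + b * D a) ∧
      (∀ a : R, ∃ n : ℕ, D^[n] a = 0) := by
  classical
  set φ : R →+* Localization.Away h := (algebraMap R (Localization.Away h)) with hφdef
  have hle : Submonoid.powers h ≤ nonZeroDivisors R :=
    powers_le_nonZeroDivisors_of_noZeroDivisors hh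
  haveI hdom : IsDomain (Localization.Away h) :=
    IsLocalization.isDomain_of_le_nonZeroDivisors _ hle
  have hinj : Function.Injective φ := IsLocalization.injective _ hle
  haveI hchR : CharZero R := charZero_of_injective_algebraMap (algebraMap ℚ R).injective
  haveI hchL : CharZero (Localization.Away h) := charZero_of_injective_algebraMap hinj
  -- basic facts about d
  have h1 : d 1 = 0 := by
    have := hleib 1 1
    simp only [one_mul] at this
    linear_combination -this
  have h0 : d 0 = 0 := by
    have := hadd 0 0
    rw [add_zero] at this
    linear_combination -this
  have hnat : ∀ m : ℕ, d (m : Localization.Away h) = 0 := by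
    intro m
    induction m with
    | zero => simpa using h0
    | succ k ih => rw [Nat.cast_succ, hadd, ih, h1, add_zero]
  have hneg : ∀ a : Localization.Away h, d (-a) = -d a := by
    intro a
    have := hadd a (-a)
    rw [add_neg_cancel, h0] at this
    linear_combination -this
  have hint : ∀ m : ℤ, d (m : Localization.Away h) = 0 := by
    intro m
    induction m using Int.induction_on with
    | zero => simpa using h0
    | succ k ih => push_cast; rw [hadd]; push_cast at ih; rw [ih, h1, add_zero]
    | pred k ih =>
      push_cast
      rw [sub_eq_add_neg, hadd]
      push_cast at ih
      rw [ih, hneg, h1, neg_zero, add_zero]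
  have hiter0 : ∀ n : ℕ, d^[n] (0 : Localization.Away h) = 0 := by
    intro n
    induction n with
    | zero => rfl
    | succ k ih => rw [Function.iterate_succ_apply, h0, ih]
  have hvanish : ∀ (x : Localization.Away h) (N n : ℕ), d^[N] x = 0 → N ≤ n → d^[n] x = 0 := by
    intro x N n hN hle'
    rw [← Nat.sub_add_cancel hle', Function.iterate_add_apply, hN, hiter0]
  -- d kills units
  have hunit : ∀ x : Localization.Away h, IsUnit x → d x = 0 := by
    intro x hx
    by_contra hdx
    obtain ⟨v, hv⟩ := hx.exists_right_inv
    have hxne : x ≠ 0 := by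
      intro h'; rw [h', zero_mul] at hv; exact zero_ne_one hv
    have hvne : v ≠ 0 := by
      intro h'; rw [h', mul_zero] at hv; exact zero_ne_one hv
    set N := Nat.find (hln x) with hNdef
    set M := Nat.find (hln v) with hMdef
    have hNspec : d^[N] x = 0 := by rw [hNdef]; exact Nat.find_spec (hln x)
    have hMspec : d^[M] v = 0 := by rw [hMdef]; exact Nat.find_spec (hln v)
    have hN0 : N ≠ 0 := by
      intro e; apply hxne; have := hNspec; rw [e] at this; simpa using this
    have hN1 : N ≠ 1 := by
      intro e; apply hdx; have := hNspec; rw [e] at this; simpa using this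
    have hM0 : M ≠ 0 := by
      intro e; apply hvne; have := hMspec; rw [e] at this; simpa using this
    set p := N - 1 with hpdef
    set q := M - 1 with hqdef
    have hp : d^[p] x ≠ 0 := Nat.find_min (hln x) (by omega)
    have hq : d^[q] v ≠ 0 := Nat.find_min (hln v) (by omega)
    have hx_high : ∀ n, p < n → d^[n] x = 0 := fun n hn => hvanish x N n hNspec (by omega)
    have hv_high : ∀ n, q < n → d^[n] v = 0 := fun n hn => hvanish v M n hMspec (by omega)
    have hone : d^[p + q] (x * v) = 0 := by
      rw [hv]
      have hpq : p + q = (p + q - 1) + 1 := by omega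
      rw [hpq, Function.iterate_succ_apply, h1, hiter0]
    have hbin := lnd_aux_iter_mul d hadd hleib x v (p + q)
    rw [hone] at hbin
    have hsingle : ∑ k ∈ Finset.range (p + q + 1),
        ((p + q).choose k : Localization.Away h) * (d^[k] x * d^[p + q - k] v)
          = ((p + q).choose p : Localization.Away h) * (d^[p] x * d^[q] v) := by
      rw [Finset.sum_eq_single p]
      · rw [Nat.add_sub_cancel_left]
      · intro b _ hbp
        rcases Nat.lt_or_ge b p with hb | hb
        · have : q < p + q - b := by omega
          rw [hv_high _ this, mul_zero, mul_zero]
        · have : p < b := lt_of_le_of_ne hb (Ne.symm hbp)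
          rw [hx_high _ this, zero_mul, mul_zero]
      · intro hcon
        exact absurd (Finset.mem_range.mpr (by omega)) hcon
    rw [hsingle] at hbin
    have hc : ((p + q).choose p : Localization.Away h) ≠ 0 :=
      Nat.cast_ne_zero.mpr (Nat.choose_pos (Nat.le_add_right p q)).ne'
    rcases mul_eq_zero.mp hbin.symm with h' | h'
    · exact hc h'
    · rcases mul_eq_zero.mp h' with h'' | h''
      · exact hp h''
      · exact hq h''
  -- d kills (φ h)^k
  have hu : d (φ h) = 0 :=
    hunit _ (IsLocalization.map_units _ ⟨h, Submonoid.mem_powers h⟩)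
  have hupow : ∀ k : ℕ, d (φ h ^ k) = 0 := by
    intro k
    induction k with
    | zero => simpa using h1
    | succ j ih => rw [pow_succ, hleib, ih, hu, mul_zero, mul_zero, add_zero]
  have hconst : ∀ c z : Localization.Away h,
      d c = 0 → ∀ n : ℕ, d^[n] (c * z) = c * d^[n] z := by
    intro c z hc n
    induction n generalizing z with
    | zero => rfl
    | succ j ih =>
      rw [Function.iterate_succ_apply, Function.iterate_succ_apply, hleib, hc, mul_zero,
        add_zero, ih]
  -- d kills rational constants
  have hrat : ∀ qq : ℚ, d (φ (algebraMap ℚ R qq)) = 0 := by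
    intro qq
    have e1 : φ (algebraMap ℚ R qq) = algebraMap ℚ (Localization.Away h) qq :=
      (IsScalarTower.algebraMap_apply ℚ R (Localization.Away h) qq).symm
    have e2 : (qq.den : Localization.Away h) * algebraMap ℚ (Localization.Away h) qq
        = (qq.num : Localization.Away h) := by
      rw [← map_natCast (algebraMap ℚ (Localization.Away h)) qq.den, ← map_mul,
        ← map_intCast (algebraMap ℚ (Localization.Away h)) qq.num]
      congr 1
      rw [mul_comm]
      exact_mod_cast Rat.mul_den_eq_num qq
    have e3 : d ((qq.den : Localization.Away h) * algebraMap ℚ (Localization.Away h) qq)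
        = (qq.den : Localization.Away h) * d (algebraMap ℚ (Localization.Away h) qq) := by
      rw [hleib, hnat, mul_zero, add_zero]
    rw [e2, hint] at e3
    have hden : (qq.den : Localization.Away h) ≠ 0 := Nat.cast_ne_zero.mpr qq.den_ne_zero
    rw [e1]
    rcases mul_eq_zero.mp e3.symm with h' | h'
    · exact absurd h' hden
    · exact h'
  -- find m
  obtain ⟨s, hs⟩ := hfg.out
  have key : ∀ g : R, ∃ (n : ℕ) (t : R), φ h ^ n * d (φ g) = φ t := by
    intro g
    obtain ⟨n, a, hna⟩ := IsLocalization.Away.surj (S := Localization.Away h) h (d (φ g))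
    exact ⟨n, a, by rw [← hna]; ring⟩
  choose nf tf htf using key
  set m := s.sup nf with hm
  refine ⟨m, ?_⟩
  set S : Subalgebra ℚ R :=
    { carrier := {r : R | ∃ t : R, φ t = φ h ^ m * d (φ r)}
      zero_mem' := ⟨0, by rw [map_zero, h0, mul_zero]⟩
      one_mem' := ⟨0, by rw [map_zero, map_one, h1, mul_zero]⟩
      add_mem' := by
        rintro a b ⟨ta, hta⟩ ⟨tb, htb⟩
        exact ⟨ta + tb, by rw [map_add, map_add, hadd, mul_add, hta, htb]⟩
      mul_mem' := by
        rintro a b ⟨ta, hta⟩ ⟨tb, htb⟩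
        refine ⟨a * tb + b * ta, ?_⟩
        rw [map_add, map_mul, map_mul, map_mul, hta, htb, hleib]
        ring
      algebraMap_mem' := fun q => ⟨0, by rw [map_zero, hrat, mul_zero]⟩ } with hS
  have hStop : ∀ r : R, r ∈ S := by
    have hsub : Algebra.adjoin ℚ (s : Set R) ≤ S := by
      apply Algebra.adjoin_le
      intro g hg
      refine ⟨h ^ (m - nf g) * tf g, ?_⟩
      rw [map_mul, map_pow, ← htf g, ← mul_assoc, ← pow_add]
      congr 2
      exact Nat.sub_add_cancel (Finset.le_sup hg)
    intro r
    exact hsub (hs ▸ Algebra.mem_top : r ∈ Algebra.adjoin ℚ (s : Set R))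
  have main : ∀ r : R, ∃ t : R, φ t = φ h ^ m * d (φ r) := fun r => hStop r
  set D : R → R := fun r => Classical.choose (main r) with hD
  have hDspec : ∀ r : R, φ (D r) = φ h ^ m * d (φ r) := fun r => Classical.choose_spec (main r)
  refine ⟨D, hDspec, ?_, ?_, ?_⟩
  · intro a b
    apply hinj
    rw [map_add, hDspec, hDspec, hDspec, map_add, hadd, mul_add]
  · intro a b
    apply hinj
    rw [hDspec, map_add, map_mul, map_mul, map_mul, hDspec, hDspec, hleib]
    ring
  · intro a
    have hcomm : ∀ (n : ℕ) (r : R), φ (D^[n] r) = φ h ^ (n * m) * d^[n] (φ r) := by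
      intro n
      induction n with
      | zero => intro r; simp
      | succ j ih =>
        intro r
        rw [Function.iterate_succ_apply, ih, hDspec, hconst _ _ (hupow m),
          ← Function.iterate_succ_apply, ← mul_assoc, ← pow_add]
        congr 2
        ring
    obtain ⟨n, hn⟩ := hln (φ a)
    refine ⟨n, hinj ?_⟩
    rw [hcomm n a, hn, mul_zero, map_zero]
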